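/- Let n ≥ 1, t₁ > 0 and c > 0. Let λ₁,…,λₙ : [t₁,∞) → ℂ be continuous with λₙ ≡ 0 and Re λⱼ(t) ≥ 0 for all t ≥ t₁ and all j < n, and let R : [t₁,∞) → Matrix(n,n,ℂ) be continuous with ‖R(t)‖ ≤ c/t² for all t ≥ t₁. Then there exist a constant C > 0 and a differentiable function w : [t₁,∞) → ℂⁿ solving w′(t) = (Λ(t) + R(t))·w(t), where Λ(t) = diag(λ₁(t),…,λₙ(t)), such that for all t ≥ t₁: |wₙ(t) − 1| ≤ C/t and |wⱼ(t)| ≤ C/t for every j < n. In particular w(t) → (0,…,0,1)ᵀ as t → ∞. -/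

import Mathlib

open MeasureTheory Set Filter Topology

lemma aux_rpow_eq (k : ℕ) {t : ℝ} (ht : 0 < t) :
    ∀ s ∈ Ioi t, s ^ (-((k : ℝ) + 2)) = (s ^ (k + 2))⁻¹ := by
  intro s hs
  have hs0 : 0 < s := ht.trans hs
  rw [Real.rpow_neg hs0.le, ← Real.rpow_natCast s (k + 2)]
  push_cast
  ring_nf

lemma aux_integrableOn_inv_pow (k : ℕ) {t : ℝ} (ht : 0 < t) :
    IntegrableOn (fun s : ℝ => (s ^ (k + 2))⁻¹) (Ioi t) := by
  have h := integrableOn_Ioi_rpow_of_lt (a := -((k : ℝ) + 2)) (by linarith) ht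
  exact h.congr_fun (aux_rpow_eq k ht) measurableSet_Ioi

lemma aux_integral_inv_pow (k : ℕ) {t : ℝ} (ht : 0 < t) :
    ∫ s in Ioi t, (s ^ (k + 2))⁻¹ = (((k : ℝ) + 1) * t ^ (k + 1))⁻¹ := by
  rw [← setIntegral_congr_fun measurableSet_Ioi (aux_rpow_eq k ht),
    integral_Ioi_rpow_of_lt (by linarith) ht]
  have h1 : -((k : ℝ) + 2) + 1 = -((k : ℝ) + 1) := by ring
  rw [h1, Real.rpow_neg ht.le, ← Real.rpow_natCast t (k + 1)]
  push_cast
  rw [neg_div, div_eq_mul_inv, mul_inv]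
  ring_nf
  rw [show (-1 - (k:ℝ)) = -(1 + k) by ring, inv_neg]
  ring


noncomputable def stEv (t₁ : ℝ) {n : ℕ} (lam : Fin n → ℝ → ℂ) (j : Fin n) (t : ℝ) : ℂ :=
  Complex.exp (∫ s in t₁..t, lam j (max s t₁))

noncomputable def stHf (t₁ : ℝ) {n : ℕ} (lam : Fin n → ℝ → ℂ)
    (R : ℝ → Matrix (Fin n) (Fin n) ℂ) (w : ℝ → Fin n → ℂ) (j : Fin n) (s : ℝ) : ℂ :=
  (R (max s t₁)).mulVec (w s) j / stEv t₁ lam j s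

noncomputable def stTf (t₁ : ℝ) {n : ℕ} (lam : Fin n → ℝ → ℂ)
    (R : ℝ → Matrix (Fin n) (Fin n) ℂ) (w : ℝ → Fin n → ℂ) (t : ℝ) (j : Fin n) : ℂ :=
  (if (j : ℕ) = n - 1 then 1 else 0) -
    stEv t₁ lam j (max t t₁) * ∫ s in Set.Ioi (max t t₁), stHf t₁ lam R w j s


/-- Levinson-type asymptotic integration theorem: if `Λ(t) = diag(λ₁(t),…,λₙ(t))` with
`λₙ ≡ 0` and `Re λⱼ(t) ≥ 0` for `j < n`, and `R(t)` is a continuous matrix perturbation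
with operator norm at most `c/t²`, then the system `w′ = (Λ + R)w` has a solution on
`[t₁,∞)` with `|wₙ(t) − 1| ≤ C/t` and `|wⱼ(t)| ≤ C/t` for `j < n`; in particular
`w(t) → eₙ` as `t → ∞`. -/
theorem stmt13 (n : ℕ) (hn : 1 ≤ n) (t₁ c : ℝ) (ht₁ : 0 < t₁) (hc : 0 < c)
    (lam : Fin n → ℝ → ℂ)
    (hlamcont : ∀ j : Fin n, ContinuousOn (lam j) (Set.Ici t₁))
    (hlamn : ∀ t : ℝ, lam ⟨n - 1, by omega⟩ t = 0)
    (hlamre : ∀ t ∈ Set.Ici t₁, ∀ j : Fin n, (j : ℕ) < n - 1 → 0 ≤ (lam j t).re)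
    (R : ℝ → Matrix (Fin n) (Fin n) ℂ)
    (hRcont : ContinuousOn R (Set.Ici t₁))
    (hRnorm : ∀ t ∈ Set.Ici t₁, ∀ v : Fin n → ℂ, ‖(R t).mulVec v‖ ≤ c / t ^ 2 * ‖v‖) :
    ∃ C > 0, ∃ w : ℝ → Fin n → ℂ,
      (∀ t ∈ Set.Ici t₁, HasDerivWithinAt w
        ((Matrix.diagonal (fun j => lam j t) + R t).mulVec (w t)) (Set.Ici t₁) t) ∧
      (∀ t ∈ Set.Ici t₁,
        ‖w t ⟨n - 1, by omega⟩ - 1‖ ≤ C / t ∧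
        ∀ j : Fin n, (j : ℕ) < n - 1 → ‖w t j‖ ≤ C / t) ∧
      Filter.Tendsto w Filter.atTop
        (nhds fun j : Fin n => if (j : ℕ) = n - 1 then 1 else 0) := by
  have hmem : ∀ s : ℝ, max s t₁ ∈ Set.Ici t₁ := fun s => Set.mem_Ici.2 (le_max_right _ _)
  have hmax : Continuous fun s : ℝ => max s t₁ := continuous_id.max continuous_const
  have hLcont : ∀ j, Continuous fun s => lam j (max s t₁) := fun j =>
    (hlamcont j).comp_continuous hmax hmem
  have hRtcont : Continuous fun s => R (max s t₁) := hRcont.comp_continuous hmax hmem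
  -- nonneg real part everywhere
  have hRe0 : ∀ (j : Fin n) (u : ℝ), u ∈ Set.Ici t₁ → 0 ≤ (lam j u).re := by
    intro j u hu
    rcases lt_or_ge (j : ℕ) (n - 1) with h | h
    · exact hlamre u hu j h
    · have hlt := j.isLt
      have hv : (j : ℕ) = n - 1 := by omega
      have hj : j = ⟨n - 1, by omega⟩ := Fin.ext (by simp [hv])
      rw [hj, hlamn]; simp
  -- derivative of the exponent
  have hℓD : ∀ (j : Fin n) (t : ℝ),
      HasDerivAt (fun u => ∫ s in t₁..u, lam j (max s t₁)) (lam j (max t t₁)) t := by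
    intro j t
    exact intervalIntegral.integral_hasDerivAt_right
      ((hLcont j).intervalIntegrable _ _)
      ((hLcont j).stronglyMeasurable.stronglyMeasurableAtFilter)
      (hLcont j).continuousAt
  have hEvD : ∀ (j : Fin n) (t : ℝ),
      HasDerivAt (stEv t₁ lam j) (lam j (max t t₁) * stEv t₁ lam j t) t := by
    intro j t
    have := (hℓD j t).cexp
    rw [mul_comm]; exact this
  have hEvcont : ∀ j, Continuous (stEv t₁ lam j) := by
    intro j
    exact (intervalIntegral.continuous_primitive
      (fun a b => (hLcont j).intervalIntegrable a b) t₁).cexp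
  have hEvne : ∀ j t, stEv t₁ lam j t ≠ 0 := fun j t => Complex.exp_ne_zero _
  -- monotonicity of the real part of the exponent
  have hre_mono : ∀ (j : Fin n) (a b : ℝ), a ≤ b →
      (∫ s in t₁..a, lam j (max s t₁)).re ≤ (∫ s in t₁..b, lam j (max s t₁)).re := by
    intro j a b hab
    have hsplit : (∫ s in t₁..b, lam j (max s t₁)) =
        (∫ s in t₁..a, lam j (max s t₁)) + ∫ s in a..b, lam j (max s t₁) :=
      (intervalIntegral.integral_add_adjacent_intervals
        ((hLcont j).intervalIntegrable _ _) ((hLcont j).intervalIntegrable _ _)).symm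
    rw [hsplit, Complex.add_re, le_add_iff_nonneg_right]
    have : (∫ s in a..b, lam j (max s t₁)).re = ∫ s in a..b, (lam j (max s t₁)).re := by
      simpa using
        (Complex.reCLM.intervalIntegral_comp_comm ((hLcont j).intervalIntegrable a b)).symm
    rw [this]
    exact intervalIntegral.integral_nonneg hab fun u _ => hRe0 j _ (hmem u)
  have hEvnorm : ∀ (j : Fin n) (a b : ℝ), a ≤ b → ‖stEv t₁ lam j a‖ ≤ ‖stEv t₁ lam j b‖ := by
    intro j a b hab
    rw [stEv, stEv, Complex.norm_exp,
      Complex.norm_exp]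
    exact Real.exp_le_exp.2 (hre_mono j a b hab)
  have hEv1 : ∀ (j : Fin n) (s : ℝ), t₁ ≤ s → 1 ≤ ‖stEv t₁ lam j s‖ := by
    intro j s hs
    have h0 : stEv t₁ lam j t₁ = 1 := by simp [stEv]
    have := hEvnorm j t₁ s hs
    rwa [h0, norm_one] at this
  have hmv : ∀ (v : ℝ → Fin n → ℂ), Continuous v → ∀ j : Fin n,
      Continuous fun s => (R (max s t₁)).mulVec (v s) j := by
    intro v hv j
    simp only [Matrix.mulVec, dotProduct]
    exact continuous_finset_sum _ fun k _ =>
      ((continuous_apply k).comp ((continuous_apply j).comp hRtcont)).mul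
        ((continuous_apply k).comp hv)
  have hhfcont : ∀ (v : ℝ → Fin n → ℂ), Continuous v → ∀ j : Fin n,
      Continuous (stHf t₁ lam R v j) := fun v hv j =>
    (hmv v hv j).div (hEvcont j) fun t => hEvne j t
  have key : ∀ (v : ℝ → Fin n → ℂ), Continuous v → ∀ (D : ℝ) (k : ℕ), 0 ≤ D →
      (∀ s, t₁ ≤ s → ‖v s‖ ≤ D * (c / s) ^ k / (k.factorial : ℝ)) →
      ∀ (j : Fin n) (τ : ℝ), t₁ ≤ τ →
      IntegrableOn (stHf t₁ lam R v j) (Set.Ioi τ) ∧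
      ‖stEv t₁ lam j τ * ∫ s in Set.Ioi τ, stHf t₁ lam R v j s‖ ≤
        D * (c / τ) ^ (k + 1) / ((k + 1).factorial : ℝ) := by
    intro v hv D k hD hvb j τ hτ
    have hτ0 : 0 < τ := lt_of_lt_of_le ht₁ hτ
    set A : ℝ := D * c ^ (k + 1) / (k.factorial : ℝ) with hA
    have hBint : IntegrableOn (fun s : ℝ => A * (s ^ (k + 2))⁻¹) (Set.Ioi τ) :=
      (aux_integrableOn_inv_pow k hτ0).const_mul A
    have hmb : ∀ s : ℝ, s ∈ Set.Ioi τ →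
        ‖(R (max s t₁)).mulVec (v s) j‖ ≤ A * (s ^ (k + 2))⁻¹ := by
      intro s hs
      have hs1 : t₁ ≤ s := le_trans hτ (le_of_lt hs)
      have hs0 : 0 < s := lt_of_lt_of_le ht₁ hs1
      have hmaxs : max s t₁ = s := max_eq_left hs1
      have h1 : ‖(R (max s t₁)).mulVec (v s) j‖ ≤ ‖(R (max s t₁)).mulVec (v s)‖ :=
        norm_le_pi_norm _ j
      have h2 := hRnorm (max s t₁) (hmem s) (v s)
      have h3 := hvb s hs1
      calc ‖(R (max s t₁)).mulVec (v s) j‖ ≤ c / s ^ 2 * ‖v s‖ := by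
            rw [hmaxs] at h1 h2 ⊢; exact le_trans h1 h2
        _ ≤ c / s ^ 2 * (D * (c / s) ^ k / (k.factorial : ℝ)) :=
            mul_le_mul_of_nonneg_left h3 (by positivity)
        _ = A * (s ^ (k + 2))⁻¹ := by
            rw [hA, div_pow]
            have hk : (k.factorial : ℝ) ≠ 0 := Nat.cast_ne_zero.2 k.factorial_ne_zero
            field_simp
            ring
    have hEs : ∀ s : ℝ, s ∈ Set.Ioi τ → ‖stHf t₁ lam R v j s‖ ≤ A * (s ^ (k + 2))⁻¹ := by
      intro s hs
      have hs1 : t₁ ≤ s := le_trans hτ (le_of_lt hs)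
      rw [stHf, norm_div]
      exact le_trans (div_le_self (norm_nonneg _) (hEv1 j s hs1)) (hmb s hs)
    have hint : IntegrableOn (stHf t₁ lam R v j) (Set.Ioi τ) := by
      apply Integrable.mono' hBint ((hhfcont v hv j).aestronglyMeasurable.restrict)
      exact (ae_restrict_iff' measurableSet_Ioi).2 (ae_of_all _ hEs)
    refine ⟨hint, ?_⟩
    rw [← MeasureTheory.integral_const_mul]
    have hb2 : ∀ᵐ s ∂(volume.restrict (Set.Ioi τ)),
        ‖stEv t₁ lam j τ * stHf t₁ lam R v j s‖ ≤ A * (s ^ (k + 2))⁻¹ := by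
      refine (ae_restrict_iff' measurableSet_Ioi).2 (ae_of_all _ fun s hs => ?_)
      have hs2 : τ ≤ s := le_of_lt hs
      have hs1 : t₁ ≤ s := le_trans hτ hs2
      rw [norm_mul, stHf, norm_div]
      have h4 : ‖stEv t₁ lam j τ‖ ≤ ‖stEv t₁ lam j s‖ := hEvnorm j τ s hs2
      have h5 : 0 < ‖stEv t₁ lam j s‖ := lt_of_lt_of_le one_pos (hEv1 j s hs1)
      calc ‖stEv t₁ lam j τ‖ * (‖(R (max s t₁)).mulVec (v s) j‖ / ‖stEv t₁ lam j s‖)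
          ≤ ‖stEv t₁ lam j s‖ * (‖(R (max s t₁)).mulVec (v s) j‖ / ‖stEv t₁ lam j s‖) := by
            gcongr
        _ = ‖(R (max s t₁)).mulVec (v s) j‖ := by
            rw [mul_comm, div_mul_cancel₀ _ (ne_of_gt h5)]
        _ ≤ A * (s ^ (k + 2))⁻¹ := hmb s hs
    refine le_trans (MeasureTheory.norm_integral_le_of_norm_le hBint hb2) ?_
    rw [MeasureTheory.integral_const_mul, aux_integral_inv_pow k hτ0]
    apply le_of_eq
    rw [hA, div_pow, Nat.factorial_succ]
    have hk : (k.factorial : ℝ) ≠ 0 := Nat.cast_ne_zero.2 k.factorial_ne_zero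
    push_cast
    field_simp
  -- splitting the improper integral
  have hsplit : ∀ (v : ℝ → Fin n → ℂ), Continuous v → ∀ (D : ℝ), 0 ≤ D →
      (∀ s, t₁ ≤ s → ‖v s‖ ≤ D) → ∀ (j : Fin n) (τ : ℝ), t₁ ≤ τ →
      (∫ s in Set.Ioi τ, stHf t₁ lam R v j s) =
        (∫ s in Set.Ioi t₁, stHf t₁ lam R v j s) - ∫ s in t₁..τ, stHf t₁ lam R v j s := by
    intro v hv D hD hvb j τ hτ
    have hbb : ∀ s, t₁ ≤ s → ‖v s‖ ≤ D * (c / s) ^ 0 / (Nat.factorial 0 : ℝ) := by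
      intro s hs; simpa using hvb s hs
    have hint1 := (key v hv D 0 hD hbb j t₁ le_rfl).1
    have hioc : (Set.Ioc t₁ τ) ∪ (Set.Ioi τ) = Set.Ioi t₁ := Set.Ioc_union_Ioi_eq_Ioi hτ
    have h2 : ∫ s in (Set.Ioc t₁ τ) ∪ (Set.Ioi τ), stHf t₁ lam R v j s =
        (∫ s in Set.Ioc t₁ τ, stHf t₁ lam R v j s) + ∫ s in Set.Ioi τ, stHf t₁ lam R v j s :=
      setIntegral_union Set.Ioc_disjoint_Ioi_same measurableSet_Ioi
        (hint1.mono_set Set.Ioc_subset_Ioi_self) (hint1.mono_set (Set.Ioi_subset_Ioi hτ))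
    rw [hioc] at h2
    rw [intervalIntegral.integral_of_le hτ, h2]
    ring
  -- continuity of the operator output
  have hTfcont : ∀ (v : ℝ → Fin n → ℂ), Continuous v → ∀ (D : ℝ), 0 ≤ D →
      (∀ s, t₁ ≤ s → ‖v s‖ ≤ D) → Continuous fun t => stTf t₁ lam R v t := by
    intro v hv D hD hvb
    apply continuous_pi
    intro j
    have heq : (fun t => stTf t₁ lam R v t j) = fun t =>
        (if (j : ℕ) = n - 1 then (1 : ℂ) else 0) - stEv t₁ lam j (max t t₁) *
          ((∫ s in Set.Ioi t₁, stHf t₁ lam R v j s) -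
            ∫ s in t₁..(max t t₁), stHf t₁ lam R v j s) := by
      funext t
      rw [stTf, hsplit v hv D hD hvb j (max t t₁) (le_max_right _ _)]
    rw [heq]
    refine continuous_const.sub (((hEvcont j).comp hmax).mul (continuous_const.sub ?_))
    exact (intervalIntegral.continuous_primitive
      (fun a b => (hhfcont v hv j).intervalIntegrable a b) t₁).comp hmax
  -- boundedness of the operator output
  have hTfb : ∀ (v : ℝ → Fin n → ℂ), Continuous v → ∀ (D : ℝ), 0 ≤ D →
      (∀ s, t₁ ≤ s → ‖v s‖ ≤ D) → ∀ t, ‖stTf t₁ lam R v t‖ ≤ 1 + D * c / t₁ := by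
    intro v hv D hD hvb t
    have h1 : (0:ℝ) ≤ 1 + D * c / t₁ := by positivity
    refine (pi_norm_le_iff_of_nonneg h1).2 fun j => ?_
    rw [stTf]
    have hτ : t₁ ≤ max t t₁ := le_max_right _ _
    have hτ0 : 0 < max t t₁ := lt_of_lt_of_le ht₁ hτ
    have hbb : ∀ s, t₁ ≤ s → ‖v s‖ ≤ D * (c / s) ^ 0 / (Nat.factorial 0 : ℝ) := by
      intro s hs; simpa using hvb s hs
    have hkey := (key v hv D 0 hD hbb j (max t t₁) hτ).2
    refine le_trans (norm_sub_le _ _) (add_le_add ?_ ?_)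
    · split <;> norm_num
    · refine le_trans hkey ?_
      norm_num
      calc D * (c / max t t₁) ≤ D * (c / t₁) :=
            mul_le_mul_of_nonneg_left (by gcongr) hD
        _ = D * c / t₁ := by ring
  -- the operator on bounded continuous functions
  let Φ : BoundedContinuousFunction ℝ (Fin n → ℂ) → BoundedContinuousFunction ℝ (Fin n → ℂ) :=
    fun w => BoundedContinuousFunction.ofNormedAddCommGroup
      (fun t => stTf t₁ lam R (⇑w) t)
      (hTfcont (⇑w) w.continuous ‖w‖ (norm_nonneg w) fun s _ => w.norm_coe_le_norm s)
      (1 + ‖w‖ * c / t₁)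
      (hTfb (⇑w) w.continuous ‖w‖ (norm_nonneg w) fun s _ => w.norm_coe_le_norm s)
  have hΦcoe : ∀ (w : BoundedContinuousFunction ℝ (Fin n → ℂ)) (t : ℝ),
      Φ w t = stTf t₁ lam R (⇑w) t := fun w t => rfl
  -- difference formula
  have hTdiff : ∀ (u u' : BoundedContinuousFunction ℝ (Fin n → ℂ)) (t : ℝ) (j : Fin n),
      stTf t₁ lam R (⇑u) t j - stTf t₁ lam R (⇑u') t j =
      -(stEv t₁ lam j (max t t₁) *
        ∫ s in Set.Ioi (max t t₁), stHf t₁ lam R (⇑u - ⇑u') j s) := by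
    intro u u' t j
    have hτ : t₁ ≤ max t t₁ := le_max_right _ _
    have hbu : ∀ s, t₁ ≤ s → ‖u s‖ ≤ ‖u‖ * (c / s) ^ 0 / (Nat.factorial 0 : ℝ) := by
      intro s hs; simpa using u.norm_coe_le_norm s
    have hbu' : ∀ s, t₁ ≤ s → ‖u' s‖ ≤ ‖u'‖ * (c / s) ^ 0 / (Nat.factorial 0 : ℝ) := by
      intro s hs; simpa using u'.norm_coe_le_norm s
    have hiu := (key (⇑u) u.continuous ‖u‖ 0 (norm_nonneg u) hbu j _ hτ).1
    have hiu' := (key (⇑u') u'.continuous ‖u'‖ 0 (norm_nonneg u') hbu' j _ hτ).1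
    have hfe : ∀ s : ℝ, stHf t₁ lam R (⇑u - ⇑u') j s =
        stHf t₁ lam R (⇑u) j s - stHf t₁ lam R (⇑u') j s := by
      intro s
      simp only [stHf, Pi.sub_apply, Matrix.mulVec_sub, sub_div]
    rw [stTf, stTf]
    simp only [hfe]
    rw [integral_sub hiu hiu', mul_sub]
    ring
  -- iterated contraction estimate
  have hiter : ∀ (k : ℕ) (w w' : BoundedContinuousFunction ℝ (Fin n → ℂ)) (t : ℝ),
      ‖(Φ^[k]) w t - (Φ^[k]) w' t‖ ≤
        dist w w' * (c / max t t₁) ^ k / (k.factorial : ℝ) := by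
    intro k
    induction k with
    | zero =>
      intro w w' t
      have h := BoundedContinuousFunction.dist_coe_le_dist (f := w) (g := w') t
      rw [dist_eq_norm] at h
      simpa using h
    | succ k ih =>
      intro w w' t
      rw [Function.iterate_succ_apply', Function.iterate_succ_apply']
      have hvcont : Continuous (⇑(Φ^[k] w) - ⇑(Φ^[k] w')) :=
        (Φ^[k] w).continuous.sub (Φ^[k] w').continuous
      have hvb : ∀ s, t₁ ≤ s → ‖(⇑(Φ^[k] w) - ⇑(Φ^[k] w')) s‖ ≤
          dist w w' * (c / s) ^ k / (k.factorial : ℝ) := by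
        intro s hs
        have h := ih w w' s
        rw [max_eq_left hs] at h
        simpa using h
      have hτ : t₁ ≤ max t t₁ := le_max_right _ _
      have hτ0 : 0 < max t t₁ := lt_of_lt_of_le ht₁ hτ
      have h0 : (0:ℝ) ≤ dist w w' * (c / max t t₁) ^ (k + 1) / ((k + 1).factorial : ℝ) := by
        have hd : (0:ℝ) ≤ dist w w' := dist_nonneg
        positivity
      refine (pi_norm_le_iff_of_nonneg h0).2 fun j => ?_
      rw [Pi.sub_apply, hΦcoe, hΦcoe, hTdiff _ _ t j, norm_neg]
      exact (key _ hvcont (dist w w') k dist_nonneg hvb j (max t t₁) hτ).2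
  -- choose m making the m-th iterate a contraction
  obtain ⟨m, hm⟩ : ∃ m : ℕ, (c / t₁) ^ m / (m.factorial : ℝ) < 1 :=
    ((FloorSemiring.tendsto_pow_div_factorial_atTop (c / t₁)).eventually
      (gt_mem_nhds one_pos)).exists
  have hm0 : 0 ≤ (c / t₁) ^ m / (m.factorial : ℝ) := by positivity
  set K : NNReal := Real.toNNReal ((c / t₁) ^ m / (m.factorial : ℝ)) with hK
  have hK1 : K < 1 := by
    rw [hK, ← Real.toNNReal_one]
    exact (Real.toNNReal_lt_toNNReal_iff one_pos).2 hm
  have hlip : LipschitzWith K (Φ^[m]) := by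
    apply LipschitzWith.of_dist_le_mul
    intro w w'
    have hKd : (0:ℝ) ≤ ↑K * dist w w' := mul_nonneg K.coe_nonneg dist_nonneg
    rw [BoundedContinuousFunction.dist_le hKd]
    intro t
    rw [dist_eq_norm]
    refine le_trans (hiter m w w' t) ?_
    rw [hK, Real.coe_toNNReal _ hm0]
    have hτ : t₁ ≤ max t t₁ := le_max_right _ _
    have hτ0 : 0 < max t t₁ := lt_of_lt_of_le ht₁ hτ
    have hd : (0:ℝ) ≤ dist w w' := dist_nonneg
    calc dist w w' * (c / max t t₁) ^ m / (m.factorial : ℝ)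
        ≤ dist w w' * (c / t₁) ^ m / (m.factorial : ℝ) := by gcongr
      _ = (c / t₁) ^ m / (m.factorial : ℝ) * dist w w' := by ring
  have hcontr : ContractingWith K (Φ^[m]) := ⟨hK1, hlip⟩
  set x := ContractingWith.fixedPoint (Φ^[m]) hcontr with hxdef
  have hxfix : Φ^[m] x = x := hcontr.fixedPoint_isFixedPt
  have hΦx : Φ x = x := by
    have h1 : Φ^[m] (Φ x) = Φ x := by
      rw [← Function.iterate_succ_apply, Function.iterate_succ_apply', hxfix]
    exact hcontr.fixedPoint_unique h1
  have hwfix : ∀ t : ℝ, (⇑x) t = stTf t₁ lam R (⇑x) t := by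
    intro t
    conv_lhs => rw [← hΦx]
    exact hΦcoe x t
  -- the solution and its bounds
  set M : ℝ := ‖x‖ with hM
  have hM0 : 0 ≤ M := norm_nonneg x
  have hMb : ∀ s, t₁ ≤ s → ‖(⇑x) s‖ ≤ M * (c / s) ^ 0 / (Nat.factorial 0 : ℝ) := by
    intro s _; simpa using x.norm_coe_le_norm s
  have hbound : ∀ t, t₁ ≤ t → ∀ j : Fin n,
      ‖(⇑x) t j - (if (j : ℕ) = n - 1 then (1 : ℂ) else 0)‖ ≤ M * c / t := by
    intro t ht j
    have hmaxt : max t t₁ = t := max_eq_left ht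
    have h0 : (⇑x) t j = stTf t₁ lam R (⇑x) t j := congrFun (hwfix t) j
    rw [h0, stTf, hmaxt, sub_sub_cancel_left, norm_neg]
    have hk := (key (⇑x) x.continuous M 0 hM0 hMb j t ht).2
    have he : M * (c / t) ^ (0 + 1) / ((0 + 1).factorial : ℝ) = M * c / t := by
      norm_num; ring
    rw [he] at hk
    exact hk
  have ht0 : ∀ t, t₁ ≤ t → (0:ℝ) < t := fun t ht => lt_of_lt_of_le ht₁ ht
  have hCb : ∀ t, t₁ ≤ t → ∀ j : Fin n,
      ‖(⇑x) t j - (if (j : ℕ) = n - 1 then (1 : ℂ) else 0)‖ ≤ (M * c + 1) / t := by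
    intro t ht j
    refine le_trans (hbound t ht j) ?_
    have := ht0 t ht
    gcongr
    linarith
  have hC0 : (0:ℝ) < M * c + 1 := by
    have := mul_nonneg hM0 hc.le
    linarith
  refine ⟨M * c + 1, hC0, ⇑x, ?_, ?_, ?_⟩
  · -- the ODE
    intro t ht
    have htt : t₁ ≤ t := ht
    rw [hasDerivWithinAt_pi]
    intro j
    set CI : ℂ := ∫ s in Set.Ioi t₁, stHf t₁ lam R (⇑x) j s with hCI
    set F : ℝ → ℂ := fun u => (if (j : ℕ) = n - 1 then (1 : ℂ) else 0) -
        stEv t₁ lam j u * (CI - ∫ s in t₁..u, stHf t₁ lam R (⇑x) j s) with hF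
    have heq : ∀ u ∈ Set.Ici t₁, (⇑x) u j = F u := by
      intro u hu
      have hmaxu : max u t₁ = u := max_eq_left hu
      rw [congrFun (hwfix u) j, stTf, hmaxu,
        hsplit (⇑x) x.continuous M hM0 (fun s _ => x.norm_coe_le_norm s) j u hu, hF]
    have hPD : HasDerivAt (fun u => ∫ s in t₁..u, stHf t₁ lam R (⇑x) j s)
        (stHf t₁ lam R (⇑x) j t) t :=
      intervalIntegral.integral_hasDerivAt_right
        ((hhfcont _ x.continuous j).intervalIntegrable _ _)
        ((hhfcont _ x.continuous j).stronglyMeasurable.stronglyMeasurableAtFilter)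
        (hhfcont _ x.continuous j).continuousAt
    have hFD : HasDerivAt F
        (-(lam j (max t t₁) * (stEv t₁ lam j t *
            (CI - ∫ s in t₁..t, stHf t₁ lam R (⇑x) j s)))
          + stEv t₁ lam j t * stHf t₁ lam R (⇑x) j t) t := by
      rw [hF]
      have h := (hasDerivAt_const t
          (if (j : ℕ) = n - 1 then (1 : ℂ) else 0)).sub
        ((hEvD j t).mul ((hasDerivAt_const t CI).sub hPD))
      refine h.congr_deriv ?_
      simp only [Pi.sub_apply]
      ring
    have hEP : stEv t₁ lam j t * (CI - ∫ s in t₁..t, stHf t₁ lam R (⇑x) j s) =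
        (if (j : ℕ) = n - 1 then (1 : ℂ) else 0) - (⇑x) t j := by
      have h := heq t ht
      rw [hF] at h
      simp only at h
      linear_combination h
    have hEh : stEv t₁ lam j t * stHf t₁ lam R (⇑x) j t = (R t).mulVec ((⇑x) t) j := by
      rw [stHf, max_eq_left htt, mul_comm, div_mul_cancel₀ _ (hEvne j t)]
    have hlam0 : lam j t * (if (j : ℕ) = n - 1 then (1 : ℂ) else 0) = 0 := by
      by_cases hj : (j : ℕ) = n - 1
      · have hjj : j = ⟨n - 1, by omega⟩ := Fin.ext (by simp [hj])
        rw [if_pos hj, hjj, hlamn]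
        simp
      · rw [if_neg hj, mul_zero]
    have hF' : HasDerivAt F (lam j t * (⇑x) t j + (R t).mulVec ((⇑x) t) j) t := by
      convert hFD using 1
      rw [max_eq_left htt, hEP, hEh, mul_sub, hlam0]
      ring
    have hvec : ((Matrix.diagonal (fun j => lam j t) + R t).mulVec ((⇑x) t)) j =
        lam j t * (⇑x) t j + (R t).mulVec ((⇑x) t) j := by
      simp [Matrix.add_mulVec, Matrix.mulVec_diagonal]
    rw [hvec]
    exact (hF'.hasDerivWithinAt).congr heq (heq t ht)
  · -- the bounds
    intro t ht
    constructor
    · have h := hCb t ht ⟨n - 1, by omega⟩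
      simpa using h
    · intro j hj
      have h := hCb t ht j
      rw [if_neg (by omega), sub_zero] at h
      exact h
  · -- the limit
    have hlim : Tendsto (fun t : ℝ => (M * c + 1) / t) atTop (𝓝 0) :=
      Filter.Tendsto.div_atTop tendsto_const_nhds tendsto_id
    apply tendsto_iff_dist_tendsto_zero.2
    apply squeeze_zero' (Filter.Eventually.of_forall fun t => dist_nonneg) ?_ hlim
    filter_upwards [eventually_ge_atTop t₁] with t ht
    have h1 : (0:ℝ) ≤ (M * c + 1) / t := div_nonneg hC0.le (ht0 t ht).le
    rw [dist_pi_le_iff h1]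
    intro j
    rw [dist_eq_norm]
    exact hCb t ht j
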